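/- arXiv:2511.00741 — 9 statements merged into one kernel-verified Lean document; each statement's English description precedes it below -/
import Mathlib

section
/- Let S be a nonempty closed convex subset of a real Hilbert space H, c ∈ H, x₀ ∈ H, and η > 0. Suppose x* ∈ S maximizes ⟨c, x⟩ over x ∈ S, and let x^η = P_S(x₀ + η c) be the orthogonal projection of x₀ + η c onto S. Then 0 ≤ ⟨c, x*⟩ − ⟨c, x^η⟩ ≤ (‖x* − x₀‖² − ‖x^η − x₀‖²)/(2η). -/
open RealInnerProductSpace

/-- Lemma (bounds): for `η > 0`, a maximizer `x*` of `⟪c,·⟫` over `S`, and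
`x^η = P_S(x₀ + η c)` the projection of `x₀ + η c` onto `S`, we have
`0 ≤ ⟪c,x*⟫ - ⟪c,x^η⟫ ≤ (‖x*-x₀‖² - ‖x^η-x₀‖²)/(2η)`. -/
theorem single_projection_bounds
    {H : Type*} [NormedAddCommGroup H] [InnerProductSpace ℝ H] [CompleteSpace H]
    (S : Set H) (hne : S.Nonempty) (hcl : IsClosed S) (hconv : Convex ℝ S)
    (c x₀ : H) (η : ℝ) (hη : 0 < η)
    (xstar : H) (hxstarS : xstar ∈ S) (hxstar : ∀ z ∈ S, ⟪c, z⟫ ≤ ⟪c, xstar⟫)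
    (xη : H) (hxηS : xη ∈ S)
    (hxη : ∀ z ∈ S, ‖x₀ + η • c - xη‖ ≤ ‖x₀ + η • c - z‖) :
    0 ≤ ⟪c, xstar⟫ - ⟪c, xη⟫ ∧
      ⟪c, xstar⟫ - ⟪c, xη⟫ ≤ (‖xstar - x₀‖ ^ 2 - ‖xη - x₀‖ ^ 2) / (2 * η) := by
  have hiInf : ‖x₀ + η • c - xη‖ = ⨅ w : S, ‖x₀ + η • c - w‖ := by
    haveI : Nonempty S := ⟨⟨xη, hxηS⟩⟩
    refine le_antisymm (le_ciInf fun w => hxη w w.2) ?_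
    exact ciInf_le ⟨0, fun _ ⟨_, h⟩ => h ▸ norm_nonneg _⟩ (⟨xη, hxηS⟩ : S)
  have key : ⟪x₀ + η • c - xη, xstar - xη⟫ ≤ 0 :=
    (norm_eq_iInf_iff_real_inner_le_zero hconv hxηS).mp hiInf xstar hxstarS
  have key' : ⟪x₀ - xη, xstar - xη⟫ + η * ⟪c, xstar - xη⟫ ≤ 0 := by
    have : x₀ + η • c - xη = (x₀ - xη) + η • c := by abel
    rwa [this, inner_add_left, real_inner_smul_left] at key
  have hA : ‖xstar - x₀‖ ^ 2 =
      ‖xη - x₀‖ ^ 2 + 2 * ⟪xη - x₀, xstar - xη⟫ + ‖xstar - xη‖ ^ 2 := by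
    have h : xstar - x₀ = (xη - x₀) + (xstar - xη) := by abel
    rw [h, norm_add_sq_real]
  have hneg : ⟪xη - x₀, xstar - xη⟫ = -⟪x₀ - xη, xstar - xη⟫ := by
    have h : xη - x₀ = -(x₀ - xη) := by abel
    rw [h, inner_neg_left]
  have hsub : ⟪c, xstar - xη⟫ = ⟪c, xstar⟫ - ⟪c, xη⟫ := inner_sub_right _ _ _
  have h0 : 0 ≤ ⟪c, xstar⟫ - ⟪c, xη⟫ := sub_nonneg.mpr (hxstar xη hxηS)
  refine ⟨h0, ?_⟩
  rw [le_div_iff₀ (by positivity)]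
  nlinarith [sq_nonneg ‖xstar - xη‖]
end

section
/- Let S be a nonempty bounded closed convex subset of a real Hilbert space H with diameter D, c ∈ H, x₀ ∈ S, and η > 0. Suppose x* ∈ S maximizes ⟨c, x⟩ over S, and let x^η = P_S(x₀ + η c). Then 0 ≤ ⟨c, x*⟩ − ⟨c, x^η⟩ ≤ D²/(2η). -/
open RealInnerProductSpace

/-- For `x₀ ∈ S` bounded, the single-projection approximation error is at most
`diam(S)² / (2η)`. -/
theorem single_projection_diam_bound
    {H : Type*} [NormedAddCommGroup H] [InnerProductSpace ℝ H] [CompleteSpace H]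
    (S : Set H) (hne : S.Nonempty) (hcl : IsClosed S) (hconv : Convex ℝ S)
    (hbdd : Bornology.IsBounded S)
    (c x₀ : H) (hx₀ : x₀ ∈ S) (η : ℝ) (hη : 0 < η)
    (xstar : H) (hxstarS : xstar ∈ S) (hxstar : ∀ z ∈ S, ⟪c, z⟫ ≤ ⟪c, xstar⟫)
    (xη : H) (hxηS : xη ∈ S)
    (hxη : ∀ z ∈ S, ‖x₀ + η • c - xη‖ ≤ ‖x₀ + η • c - z‖) :
    0 ≤ ⟪c, xstar⟫ - ⟪c, xη⟫ ∧
      ⟪c, xstar⟫ - ⟪c, xη⟫ ≤ (Metric.diam S) ^ 2 / (2 * η) := by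
  have h0 : 0 ≤ ⟪c, xstar⟫ - ⟪c, xη⟫ := sub_nonneg.2 (hxstar xη hxηS)
  refine ⟨h0, ?_⟩
  -- variational inequality
  haveI : Nonempty S := ⟨⟨xη, hxηS⟩⟩
  have heq : ‖(x₀ + η • c) - xη‖ = ⨅ w : S, ‖(x₀ + η • c) - w‖ := by
    refine le_antisymm (le_ciInf fun w => hxη w w.2) ?_
    have hb : BddBelow (Set.range fun w : S => ‖(x₀ + η • c) - (w : H)‖) :=
      ⟨0, by rintro _ ⟨w, rfl⟩; exact norm_nonneg _⟩
    exact ciInf_le hb ⟨xη, hxηS⟩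
  have hvi : ⟪(x₀ + η • c) - xη, xstar - xη⟫ ≤ 0 :=
    (norm_eq_iInf_iff_real_inner_le_zero hconv hxηS).1 heq xstar hxstarS
  have hexp : ⟪(x₀ + η • c) - xη, xstar - xη⟫
      = η * ⟪c, xstar - xη⟫ - ⟪xη - x₀, xstar - xη⟫ := by
    have : (x₀ + η • c) - xη = η • c - (xη - x₀) := by abel
    rw [this, inner_sub_left, real_inner_smul_left]
  have h1 : η * ⟪c, xstar - xη⟫ ≤ ⟪xη - x₀, xstar - xη⟫ := by
    rw [hexp] at hvi; linarith
  have h2 : 2 * ⟪xη - x₀, xstar - xη⟫ ≤ ‖xstar - x₀‖ ^ 2 := by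
    have hid := norm_add_sq_real (xη - x₀) (xstar - xη)
    have hsum : (xη - x₀) + (xstar - xη) = xstar - x₀ := by abel
    rw [hsum] at hid
    nlinarith [norm_nonneg (xη - x₀), norm_nonneg (xstar - xη),
      sq_nonneg ‖xη - x₀‖, sq_nonneg ‖xstar - xη‖]
  have hdiam : ‖xstar - x₀‖ ≤ Metric.diam S := by
    rw [← dist_eq_norm]; exact Metric.dist_le_diam_of_mem hbdd hxstarS hx₀
  have h3 : ‖xstar - x₀‖ ^ 2 ≤ (Metric.diam S) ^ 2 :=
    pow_le_pow_left₀ (norm_nonneg _) hdiam 2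
  have hinner : ⟪c, xstar - xη⟫ = ⟪c, xstar⟫ - ⟪c, xη⟫ := inner_sub_right _ _ _
  rw [le_div_iff₀ (by positivity : (0:ℝ) < 2 * η)]
  nlinarith [h1, h2, h3]
end

section
/- Let S be a nonempty closed convex subset of a real Hilbert space H, c ∈ H, x₀ ∈ H. For η ∈ ℝ let x^η = P_S(x₀ + η c). If 0 < η₁ < η₂ (or more generally η₁ < η₂), then ⟨c, x^{η₁}⟩ ≤ ⟨c, x^{η₂}⟩. -/
open RealInnerProductSpace

lemma proj_var_ineq {H : Type*} [NormedAddCommGroup H] [InnerProductSpace ℝ H]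
    {S : Set H} (hconv : Convex ℝ S) {u v : H} (hvS : v ∈ S)
    (hmin : ∀ z ∈ S, ‖u - v‖ ≤ ‖u - z‖) :
    ∀ w ∈ S, ⟪u - v, w - v⟫ ≤ 0 := by
  haveI : Nonempty S := ⟨⟨v, hvS⟩⟩
  have heq : ‖u - v‖ = ⨅ w : S, ‖u - w‖ := by
    apply le_antisymm
    · exact le_ciInf fun w => hmin w w.2
    · have hb : BddBelow (Set.range fun w : S => ‖u - w‖) :=
        ⟨0, fun x hx => by rcases hx with ⟨w, rfl⟩; positivity⟩
      exact ciInf_le hb ⟨v, hvS⟩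
  exact (norm_eq_iInf_iff_real_inner_le_zero hconv hvS).mp heq

/-- Monotonicity of the projected objective value in the step size:
if `η₁ < η₂` and `x^{ηᵢ} = P_S(x₀ + ηᵢ c)`, then `⟪c, x^{η₁}⟫ ≤ ⟪c, x^{η₂}⟫`. -/
theorem proj_objective_monotone
    {H : Type*} [NormedAddCommGroup H] [InnerProductSpace ℝ H] [CompleteSpace H]
    (S : Set H) (hne : S.Nonempty) (hcl : IsClosed S) (hconv : Convex ℝ S)
    (c x₀ : H) (η₁ η₂ : ℝ) (h : η₁ < η₂)
    (x1 : H) (hx1S : x1 ∈ S)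
    (hx1 : ∀ z ∈ S, ‖x₀ + η₁ • c - x1‖ ≤ ‖x₀ + η₁ • c - z‖)
    (x2 : H) (hx2S : x2 ∈ S)
    (hx2 : ∀ z ∈ S, ‖x₀ + η₂ • c - x2‖ ≤ ‖x₀ + η₂ • c - z‖) :
    ⟪c, x1⟫ ≤ ⟪c, x2⟫ := by
  have h1 := proj_var_ineq hconv hx1S hx1 x2 hx2S
  have h2 := proj_var_ineq hconv hx2S hx2 x1 hx1S
  have key : (η₁ - η₂) * ⟪c, x2 - x1⟫ + ‖x2 - x1‖ ^ 2 ≤ 0 := by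
    have hsum : ⟪x₀ + η₁ • c - x1, x2 - x1⟫ + ⟪x₀ + η₂ • c - x2, x1 - x2⟫ ≤ 0 :=
      add_nonpos h1 h2
    have : ⟪x₀ + η₂ • c - x2, x1 - x2⟫ = -⟪x₀ + η₂ • c - x2, x2 - x1⟫ := by
      rw [← inner_neg_right, neg_sub]
    rw [this] at hsum
    have hrw : ⟪x₀ + η₁ • c - x1, x2 - x1⟫ - ⟪x₀ + η₂ • c - x2, x2 - x1⟫
        = (η₁ - η₂) * ⟪c, x2 - x1⟫ + ‖x2 - x1‖ ^ 2 := by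
      rw [← inner_sub_left]
      have : x₀ + η₁ • c - x1 - (x₀ + η₂ • c - x2) = (η₁ - η₂) • c + (x2 - x1) := by
        module
      rw [this, inner_add_left, real_inner_smul_left, real_inner_self_eq_norm_sq]
    linarith [hrw ▸ (by linarith : ⟪x₀ + η₁ • c - x1, x2 - x1⟫ - ⟪x₀ + η₂ • c - x2, x2 - x1⟫ ≤ 0)]
  have hsq : (0:ℝ) ≤ ‖x2 - x1‖ ^ 2 := by positivity
  have : 0 ≤ ⟪c, x2 - x1⟫ := by nlinarith
  rw [inner_sub_right] at this
  linarith
end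

section
/- Let S be a nonempty closed convex subset of a real Hilbert space H, c ∈ H, and x₀ ∈ H. Suppose the set M of maximizers of ⟨c, x⟩ over S is nonempty. Then as η → ∞, the projections P_S(x₀ + η c) converge in norm to P_M(x₀), the unique point of M closest to x₀. -/
open RealInnerProductSpace Filter

/-- Key lemma: the infimum of `‖z-x₀‖²` over near-maximizers of `⟪c,·⟫` on `S`
tends to `‖xstar-x₀‖²` as the optimality gap tends to `0`. -/
lemma single_projection_key
    {H : Type*} [NormedAddCommGroup H] [InnerProductSpace ℝ H] [CompleteSpace H]
    (S : Set H) (hcl : IsClosed S) (hconv : Convex ℝ S)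
    (c x₀ xstar : H) (hxS : xstar ∈ S) (hmax : ∀ z ∈ S, ⟪c, z⟫ ≤ ⟪c, xstar⟫)
    (hxstar : ∀ y, y ∈ S → (∀ z ∈ S, ⟪c, z⟫ ≤ ⟪c, y⟫) → ‖xstar - x₀‖ ≤ ‖y - x₀‖)
    (ε : ℝ) (hε : 0 < ε) :
    ∃ δ > 0, ∀ z ∈ S, ⟪c, xstar⟫ - ⟪c, z⟫ ≤ δ →
      ‖xstar - x₀‖ ^ 2 - ε ≤ ‖z - x₀‖ ^ 2 := by
  set f : H → ℝ := fun z => ‖z - x₀‖ ^ 2 with hf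
  set g : H → ℝ := fun z => ⟪c, xstar⟫ - ⟪c, z⟫ with hg
  set A : ℝ := ‖xstar - x₀‖ ^ 2 with hA
  have hg0 : ∀ z ∈ S, 0 ≤ g z := fun z hz => by
    simp only [hg]; linarith [hmax z hz]
  have hgmid : ∀ a b : H, g ((2:ℝ)⁻¹ • (a + b)) = (g a + g b) / 2 := by
    intro a b
    simp only [hg, real_inner_smul_right, inner_add_right]
    ring
  have hmidS : ∀ a ∈ S, ∀ b ∈ S, (2:ℝ)⁻¹ • (a + b) ∈ S := by
    intro a ha b hb
    have := hconv ha hb (by norm_num : (0:ℝ) ≤ 2⁻¹) (by norm_num : (0:ℝ) ≤ 2⁻¹)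
      (by norm_num)
    rwa [smul_add]
  have hpar : ∀ a b : H, f ((2:ℝ)⁻¹ • (a + b)) = (f a + f b) / 2 - ‖a - b‖ ^ 2 / 4 := by
    intro a b
    have h := parallelogram_law_with_norm ℝ (a - x₀) (b - x₀)
    have h1 : (2:ℝ)⁻¹ • (a + b) - x₀ = (2:ℝ)⁻¹ • ((a - x₀) + (b - x₀)) := by
      rw [smul_add]; module
    have h2 : a - b = (a - x₀) - (b - x₀) := by abel
    simp only [hf]
    rw [h1, norm_smul, h2] at *
    simp only [norm_inv, Real.norm_ofNat] at *
    nlinarith [norm_nonneg ((a - x₀) + (b - x₀))]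
  by_contra hcon
  push_neg at hcon
  have hδ := fun n : ℕ => hcon (1 / (n + 1)) (by positivity)
  -- the sets of values
  set T : ℕ → Set ℝ := fun n => f '' {z | z ∈ S ∧ g z ≤ 1 / (n + 1)} with hT
  have hTne : ∀ n, (T n).Nonempty := by
    intro n
    obtain ⟨z, hzS, hzg, _⟩ := hδ n
    exact ⟨f z, ⟨z, ⟨hzS, hzg⟩, rfl⟩⟩
  have hTbdd : ∀ n, BddBelow (T n) := by
    intro n
    refine ⟨0, ?_⟩
    rintro r ⟨z, _, rfl⟩
    positivity
  set i : ℕ → ℝ := fun n => sInf (T n) with hi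
  have h_i_le : ∀ n, i n ≤ A - ε := by
    intro n
    obtain ⟨z, hzS, hzg, hzf⟩ := hδ n
    exact le_trans (csInf_le (hTbdd n) ⟨z, ⟨hzS, hzg⟩, rfl⟩) (le_of_lt hzf)
  have hmono : Monotone i := by
    intro n m hnm
    refine csInf_le_csInf (hTbdd n) (hTne m) ?_
    rintro r ⟨z, ⟨hzS, hzg⟩, rfl⟩
    refine ⟨z, ⟨hzS, le_trans hzg ?_⟩, rfl⟩
    gcongr <;> exact_mod_cast hnm
  have hbddA : BddAbove (Set.range i) := ⟨A - ε, by rintro r ⟨n, rfl⟩; exact h_i_le n⟩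
  set L : ℝ := ⨆ n, i n with hL
  have hiL : ∀ n, i n ≤ L := fun n => le_ciSup hbddA n
  have hLle : L ≤ A - ε := ciSup_le h_i_le
  have htendiL : Tendsto i atTop (nhds L) := tendsto_atTop_ciSup hmono hbddA
  -- choose near-infimal points
  have hw : ∀ n : ℕ, ∃ z, z ∈ S ∧ g z ≤ 1 / (n + 1) ∧ f z ≤ i n + 1 / (n + 1) := by
    intro n
    obtain ⟨r, ⟨z, ⟨hzS, hzg⟩, rfl⟩, hrlt⟩ :=
      Real.lt_sInf_add_pos (hTne n) (show (0:ℝ) < 1 / (n + 1) by positivity)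
    exact ⟨z, hzS, hzg, le_of_lt hrlt⟩
  choose w hwS hwg hwf using hw
  -- Cauchy
  have hone : ∀ n N : ℕ, N ≤ n → (1:ℝ) / (n + 1) ≤ 1 / (N + 1) := by
    intro n N h
    gcongr <;> exact_mod_cast h
  have hcauchy : CauchySeq w := by
    apply cauchySeq_of_le_tendsto_0 (b := fun N => 2 * Real.sqrt (L + 1 / (N + 1) - i N))
    · intro n m N hn hm
      have hmidmem : (2:ℝ)⁻¹ • (w n + w m) ∈ S := hmidS _ (hwS n) _ (hwS m)
      have hmidg : g ((2:ℝ)⁻¹ • (w n + w m)) ≤ 1 / (N + 1) := by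
        rw [hgmid]
        have := hone n N hn
        have := hone m N hm
        have := hwg n
        have := hwg m
        linarith
      have hiNle : i N ≤ f ((2:ℝ)⁻¹ • (w n + w m)) :=
        csInf_le (hTbdd N) ⟨_, ⟨hmidmem, hmidg⟩, rfl⟩
      have hfn : f (w n) ≤ L + 1 / (N + 1) :=
        le_trans (hwf n) (by linarith [hiL n, hone n N hn])
      have hfm : f (w m) ≤ L + 1 / (N + 1) :=
        le_trans (hwf m) (by linarith [hiL m, hone m N hm])
      have hsq : ‖w n - w m‖ ^ 2 ≤ 4 * (L + 1 / (N + 1) - i N) := by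
        have := hpar (w n) (w m)
        nlinarith
      rw [dist_eq_norm]
      have h4 : (4:ℝ) * (L + 1 / (N + 1) - i N) = (2 * Real.sqrt (L + 1 / (N + 1) - i N)) ^ 2 := by
        rw [mul_pow, Real.sq_sqrt (by nlinarith [sq_nonneg ‖w n - w m‖])]
        ring
      calc ‖w n - w m‖ = Real.sqrt (‖w n - w m‖ ^ 2) := (Real.sqrt_sq (norm_nonneg _)).symm
        _ ≤ Real.sqrt (4 * (L + 1 / (N + 1) - i N)) := Real.sqrt_le_sqrt hsq
        _ = 2 * Real.sqrt (L + 1 / (N + 1) - i N) := by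
            rw [show (4:ℝ) * (L + 1 / (N + 1) - i N) = 2 ^ 2 * (L + 1 / (N + 1) - i N) by ring,
              Real.sqrt_mul (by positivity), Real.sqrt_sq (by norm_num)]
    · have h1 : Tendsto (fun N : ℕ => L + 1 / (N + 1) - i N) atTop (nhds 0) := by
        have := (tendsto_const_nhds (x := L)).add
          tendsto_one_div_add_atTop_nhds_zero_nat |>.sub htendiL
        simpa using this
      have h2 := (Real.continuous_sqrt.tendsto' 0 0 Real.sqrt_zero).comp h1
      have h3 := h2.const_mul 2
      simpa using h3
  obtain ⟨y, hy⟩ := cauchySeq_tendsto_of_complete hcauchy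
  have hyS : y ∈ S := hcl.mem_of_tendsto hy (Eventually.of_forall hwS)
  have hgc : Continuous g := continuous_const.sub (continuous_const.inner continuous_id)
  have hfc : Continuous f := ((continuous_id.sub continuous_const).norm.pow 2)
  have hgy : g y ≤ 0 :=
    le_of_tendsto_of_tendsto' ((hgc.tendsto y).comp hy)
      tendsto_one_div_add_atTop_nhds_zero_nat (fun n => hwg n)
  have hymax : ∀ z ∈ S, ⟪c, z⟫ ≤ ⟪c, y⟫ := by
    intro z hz
    have := hmax z hz
    simp only [hg] at hgy
    linarith
  have hAy : A ≤ f y := by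
    have := hxstar y hyS hymax
    simpa [hf, hA] using pow_le_pow_left₀ (norm_nonneg _) this 2
  have hfyL : f y ≤ L := by
    have hlim : Tendsto (fun n => i n + 1 / (n + 1 : ℝ)) atTop (nhds L) := by
      have := htendiL.add tendsto_one_div_add_atTop_nhds_zero_nat
      simpa using this
    exact le_of_tendsto_of_tendsto' ((hfc.tendsto y).comp hy) hlim (fun n => hwf n)
  linarith

/-- As `η → ∞`, the projections `P_S(x₀ + η c)` converge in norm to the unique
maximizer of `⟪c, ·⟫` over `S` that is closest to `x₀`. -/
theorem single_projection_tendsto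
    {H : Type*} [NormedAddCommGroup H] [InnerProductSpace ℝ H] [CompleteSpace H]
    (S : Set H) (hne : S.Nonempty) (hcl : IsClosed S) (hconv : Convex ℝ S)
    (c x₀ : H)
    (M : Set H) (hM : M = {x ∈ S | ∀ z ∈ S, ⟪c, z⟫ ≤ ⟪c, x⟫}) (hMne : M.Nonempty)
    (xstar : H) (hxstarM : xstar ∈ M)
    (hxstar : ∀ y ∈ M, ‖xstar - x₀‖ ≤ ‖y - x₀‖)
    (proj : ℝ → H) (hprojS : ∀ η, proj η ∈ S)
    (hproj : ∀ η, ∀ z ∈ S, ‖x₀ + η • c - proj η‖ ≤ ‖x₀ + η • c - z‖) :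
    Tendsto proj atTop (nhds xstar) := by
  rw [hM] at hxstarM
  obtain ⟨hxS, hmax⟩ := hxstarM
  set A : ℝ := ‖xstar - x₀‖ ^ 2 with hA
  -- the projection minimizes `‖z-x₀‖² - 2η⟪c,z⟫` over `S`
  have hPhi : ∀ η : ℝ, ∀ z ∈ S,
      ‖proj η - x₀‖ ^ 2 - 2 * η * ⟪c, proj η⟫ ≤ ‖z - x₀‖ ^ 2 - 2 * η * ⟪c, z⟫ := by
    intro η z hz
    have hsq : ‖x₀ + η • c - proj η‖ ^ 2 ≤ ‖x₀ + η • c - z‖ ^ 2 :=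
      pow_le_pow_left₀ (norm_nonneg _) (hproj η z hz) 2
    have e : ∀ u : H, ‖x₀ + η • c - u‖ ^ 2
        = ‖u - x₀‖ ^ 2 + 2 * η * (⟪c, x₀⟫ - ⟪c, u⟫) + η ^ 2 * ‖c‖ ^ 2 := by
      intro u
      have h : x₀ + η • c - u = (x₀ - u) + η • c := by abel
      rw [h, norm_add_sq_real, real_inner_smul_right, inner_sub_left,
        norm_smul, norm_sub_rev]
      simp [real_inner_comm, mul_pow]
      ring
    rw [e (proj η), e z] at hsq
    linarith
  have hbasic : ∀ η : ℝ, ‖proj η - x₀‖ ^ 2 + 2 * η * (⟪c, xstar⟫ - ⟪c, proj η⟫) ≤ A := by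
    intro η
    have := hPhi η xstar hxS
    simp only [hA]
    linarith
  have hgap0 : ∀ η : ℝ, 0 ≤ ⟪c, xstar⟫ - ⟪c, proj η⟫ := fun η => by
    linarith [hmax (proj η) (hprojS η)]
  rw [Metric.tendsto_atTop]
  intro ε hε
  obtain ⟨δ, hδpos, hδ⟩ := single_projection_key S hcl hconv c x₀ xstar hxS hmax
    (fun y hyS hymax => hxstar y (by rw [hM]; exact ⟨hyS, hymax⟩))
    (ε ^ 2 / 8) (by positivity)
  refine ⟨max 1 (A / δ), fun η hη => ?_⟩
  have hη1 : (1:ℝ) ≤ η := le_trans (le_max_left _ _) hη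
  have hηA : A / δ ≤ η := le_trans (le_max_right _ _) hη
  set p : H := proj η with hp
  have hfp : ‖p - x₀‖ ^ 2 ≤ A := by
    have := hbasic η
    nlinarith [hgap0 η]
  have hgp : ⟪c, xstar⟫ - ⟪c, p⟫ ≤ 2 * δ := by
    have h1 := hbasic η
    have h2 : A ≤ η * δ := by
      have := (div_le_iff₀ hδpos).mp hηA
      nlinarith
    nlinarith [hgap0 η, sq_nonneg ‖p - x₀‖, hδpos]
  -- midpoint of `p` and `xstar`
  set m : H := (2:ℝ)⁻¹ • (p + xstar) with hm
  have hmS : m ∈ S := by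
    have := hconv (hprojS η) hxS (by norm_num : (0:ℝ) ≤ 2⁻¹) (by norm_num : (0:ℝ) ≤ 2⁻¹)
      (by norm_num)
    rw [hm, smul_add]
    exact this
  have hmg : ⟪c, xstar⟫ - ⟪c, m⟫ ≤ δ := by
    simp only [hm, real_inner_smul_right, inner_add_right]
    linarith
  have hmf : A - ε ^ 2 / 8 ≤ ‖m - x₀‖ ^ 2 := hδ m hmS hmg
  -- parallelogram
  have hpar : ‖m - x₀‖ ^ 2 = (‖p - x₀‖ ^ 2 + ‖xstar - x₀‖ ^ 2) / 2 - ‖p - xstar‖ ^ 2 / 4 := by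
    have h := parallelogram_law_with_norm ℝ (p - x₀) (xstar - x₀)
    have h1 : m - x₀ = (2:ℝ)⁻¹ • ((p - x₀) + (xstar - x₀)) := by
      simp only [hm]; rw [smul_add]; module
    have h2 : p - xstar = (p - x₀) - (xstar - x₀) := by abel
    rw [h1, norm_smul, h2] at *
    simp only [norm_inv, Real.norm_ofNat] at *
    nlinarith [norm_nonneg ((p - x₀) + (xstar - x₀))]
  have hfinal : ‖p - xstar‖ ^ 2 ≤ ε ^ 2 / 2 := by
    simp only [hA] at *
    nlinarith
  rw [dist_eq_norm]
  nlinarith [norm_nonneg (p - xstar)]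
end

section
/- Let S be a nonempty closed convex subset of a real Hilbert space H, c ∈ H, x₀ ∈ H, and η > 0. If x* is a maximizer of ⟨c, x⟩ over S closest to x₀, then ‖P_S(x₀ + η c) − x₀‖ ≤ ‖x* − x₀‖. -/
open RealInnerProductSpace

/-- If `x*` is a maximizer of `⟪c,·⟫` over `S` closest to `x₀`, then for any `η > 0`
the projection `P_S(x₀ + η c)` satisfies `‖P_S(x₀ + η c) - x₀‖ ≤ ‖x* - x₀‖`. -/
theorem proj_dist_le_maximizer_dist
    {H : Type*} [NormedAddCommGroup H] [InnerProductSpace ℝ H] [CompleteSpace H]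
    (S : Set H) (hne : S.Nonempty) (hcl : IsClosed S) (hconv : Convex ℝ S)
    (c x₀ : H) (η : ℝ) (hη : 0 < η)
    (xstar : H) (hxstarS : xstar ∈ S)
    (hxstarMax : ∀ z ∈ S, ⟪c, z⟫ ≤ ⟪c, xstar⟫)
    (hxstarClosest : ∀ y ∈ S, (∀ z ∈ S, ⟪c, z⟫ ≤ ⟪c, y⟫) → ‖xstar - x₀‖ ≤ ‖y - x₀‖)
    (xη : H) (hxηS : xη ∈ S)
    (hxη : ∀ z ∈ S, ‖x₀ + η • c - xη‖ ≤ ‖x₀ + η • c - z‖) :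
    ‖xη - x₀‖ ≤ ‖xstar - x₀‖ := by
  have h1 := hxη xstar hxstarS
  have hmax := hxstarMax xη hxηS
  have e1 : ‖x₀ + η • c - xη‖^2 ≤ ‖x₀ + η • c - xstar‖^2 :=
    pow_le_pow_left₀ (norm_nonneg _) h1 2
  have ea : x₀ + η • c - xη = (x₀ - xη) + η • c := by abel
  have eb : x₀ + η • c - xstar = (x₀ - xstar) + η • c := by abel
  rw [ea, eb, norm_add_sq_real, norm_add_sq_real] at e1
  have i1 : ⟪x₀ - xη, η • c⟫ = η * (⟪c, x₀⟫ - ⟪c, xη⟫) := by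
    rw [real_inner_smul_right, real_inner_comm, inner_sub_right]
  have i2 : ⟪x₀ - xstar, η • c⟫ = η * (⟪c, x₀⟫ - ⟪c, xstar⟫) := by
    rw [real_inner_smul_right, real_inner_comm, inner_sub_right]
  rw [i1, i2] at e1
  have key : ‖xη - x₀‖^2 ≤ ‖xstar - x₀‖^2 := by
    have n1 : ‖xη - x₀‖ = ‖x₀ - xη‖ := norm_sub_rev _ _
    have n2 : ‖xstar - x₀‖ = ‖x₀ - xstar‖ := norm_sub_rev _ _
    rw [n1, n2]; nlinarith [hη]
  exact (pow_le_pow_iff_left₀ (norm_nonneg _) (norm_nonneg _) two_ne_zero).mp key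
end

section
/- Let f : H → ℝ be convex, S ⊆ H a nonempty bounded closed convex set, and let {x_k} ⊆ S be generated by projected subgradient ascent x_{k+1} = P_S(x_k + η_k g_k) with η_k ≥ 0 and g_k ∈ ∂f(x_k). If f is bounded above on S, then the sequence {f(x_k)} converges. -/
open RealInnerProductSpace Filter

/-- If `f` is convex and bounded above on the nonempty bounded closed convex set `S`,
then the values along a projected subgradient ascent sequence converge. -/
theorem pga_values_converge
    {H : Type*} [NormedAddCommGroup H] [InnerProductSpace ℝ H] [CompleteSpace H]
    (S : Set H) (hne : S.Nonempty) (hcl : IsClosed S) (hconv : Convex ℝ S)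
    (hbdd : Bornology.IsBounded S)
    (f : H → ℝ) (hf : ConvexOn ℝ Set.univ f)
    (hfb : ∃ B : ℝ, ∀ z ∈ S, f z ≤ B)
    (x : ℕ → H) (η : ℕ → ℝ) (g : ℕ → H)
    (hx0 : x 0 ∈ S) (hη : ∀ k, 0 ≤ η k)
    (hg : ∀ k, ∀ z : H, f (x k) + ⟪g k, z - x k⟫ ≤ f z)
    (hxS : ∀ k, x (k + 1) ∈ S)
    (hproj : ∀ k, ∀ z ∈ S, ‖x k + η k • g k - x (k + 1)‖ ≤ ‖x k + η k • g k - z‖) :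
    ∃ L : ℝ, Tendsto (fun k => f (x k)) atTop (nhds L) := by
  have hS : ∀ k, x k ∈ S := fun k => Nat.rec hx0 (fun n _ => hxS n) k
  have hmono : ∀ k, f (x k) ≤ f (x (k + 1)) := by
    intro k
    have hinner : ∀ z ∈ S, ⟪(x k + η k • g k) - x (k + 1), z - x (k + 1)⟫ ≤ 0 := by
      haveI : Nonempty S := ⟨⟨x 0, hx0⟩⟩
      rw [← norm_eq_iInf_iff_real_inner_le_zero hconv (hS (k + 1))]
      refine le_antisymm (le_ciInf fun w => hproj k w w.2) ?_
      exact ciInf_le ⟨0, by rintro r ⟨w, rfl⟩; positivity⟩ (⟨x (k + 1), hS (k + 1)⟩ : S)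
    have h1 := hinner (x k) (hS k)
    have hrw : (x k + η k • g k) - x (k + 1) = (x k - x (k + 1)) + η k • g k := by abel
    rw [hrw, inner_add_left, real_inner_smul_left, real_inner_self_eq_norm_sq] at h1
    have hd : 0 ≤ ⟪g k, x (k + 1) - x k⟫ := by
      rcases eq_or_lt_of_le (hη k) with h0 | hpos
      · have hsq : ‖x k - x (k + 1)‖ ^ 2 ≤ 0 := by rw [← h0] at h1; simpa using h1
        have hdz : x k - x (k + 1) = 0 := by
          have h2 : ‖x k - x (k + 1)‖ = 0 := by nlinarith [norm_nonneg (x k - x (k + 1))]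
          exact norm_eq_zero.mp h2
        have h3 : x (k + 1) - x k = 0 := by rw [← neg_sub, hdz, neg_zero]
        simp [h3]
      · have h3 : ⟪g k, x k - x (k + 1)⟫ ≤ 0 := by
          by_contra h4
          push_neg at h4
          nlinarith [sq_nonneg ‖x k - x (k + 1)‖]
        rw [← neg_sub (x (k + 1)), inner_neg_right] at h3
        linarith
    have := hg k (x (k + 1))
    linarith
  obtain ⟨B, hB⟩ := hfb
  refine ⟨⨆ k, f (x k), tendsto_atTop_ciSup (monotone_nat_of_le_succ hmono) ⟨B, ?_⟩⟩
  rintro r ⟨k, rfl⟩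
  exact hB _ (hS k)
end

section
/- Let f : H → ℝ be convex, S ⊆ H nonempty closed convex, and {x_k} generated by projected subgradient ascent x_{k+1} = P_S(x_k + η_k g_k) with g_k ∈ ∂f(x_k). If f is bounded above on S and limsup_k η_k < ∞ with η_k > 0, then ‖x_{k+1} − x_k‖ → 0. -/
open RealInnerProductSpace Filter

/-- With positive step sizes bounded above (limsup finite) and `f` convex bounded above
on `S`, the projected subgradient ascent iterates satisfy `‖x_{k+1} - x_k‖ → 0`. -/
theorem pga_steps_tendsto_zero
    {H : Type*} [NormedAddCommGroup H] [InnerProductSpace ℝ H] [CompleteSpace H]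
    (S : Set H) (hne : S.Nonempty) (hcl : IsClosed S) (hconv : Convex ℝ S)
    (f : H → ℝ) (hf : ConvexOn ℝ Set.univ f)
    (hfb : ∃ B : ℝ, ∀ z ∈ S, f z ≤ B)
    (x : ℕ → H) (η : ℕ → ℝ) (g : ℕ → H)
    (hx0 : x 0 ∈ S) (hηpos : ∀ k, 0 < η k)
    (hηbdd : IsBoundedUnder (· ≤ ·) atTop η)
    (hg : ∀ k, ∀ z : H, f (x k) + ⟪g k, z - x k⟫ ≤ f z)
    (hxS : ∀ k, x (k + 1) ∈ S)
    (hproj : ∀ k, ∀ z ∈ S, ‖x k + η k • g k - x (k + 1)‖ ≤ ‖x k + η k • g k - z‖) :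
    Tendsto (fun k => ‖x (k + 1) - x k‖) atTop (nhds 0) := by
  have hxS' : ∀ k, x k ∈ S := by
    intro k; cases k with
    | zero => exact hx0
    | succ n => exact hxS n
  -- Key inequality
  have key : ∀ k, ‖x (k + 1) - x k‖ ^ 2 ≤ η k * (f (x (k + 1)) - f (x k)) := by
    intro k
    set u := x k + η k • g k with hu
    set v := x (k + 1) with hv
    haveI := hne.to_subtype
    have hinf : ‖u - v‖ = ⨅ w : S, ‖u - w‖ := by
      refine le_antisymm (le_ciInf fun w => hproj k w w.2) ?_
      exact ciInf_le ⟨0, fun r ⟨w, hw⟩ => hw ▸ norm_nonneg _⟩ (⟨v, hxS k⟩ : S)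
    have hip : ⟪u - v, x k - v⟫ ≤ 0 :=
      ((norm_eq_iInf_iff_real_inner_le_zero hconv (hxS k)).1 hinf) (x k) (hxS' k)
    have hexp : ⟪u - v, x k - v⟫ = ‖x k - v‖ ^ 2 + η k * ⟪g k, x k - v⟫ := by
      have : u - v = (x k - v) + η k • g k := by rw [hu]; abel
      rw [this, inner_add_left, real_inner_smul_left, real_inner_self_eq_norm_sq]
    have hgk : ⟪g k, v - x k⟫ ≤ f v - f (x k) := by
      have := hg k v; linarith
    have hflip : ⟪g k, x k - v⟫ = -⟪g k, v - x k⟫ := by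
      rw [← inner_neg_right]; congr 1; abel
    have h1 : ‖x k - v‖ ^ 2 ≤ η k * ⟪g k, v - x k⟫ := by
      rw [hexp, hflip] at hip; linarith
    have h2 : η k * ⟪g k, v - x k⟫ ≤ η k * (f v - f (x k)) :=
      mul_le_mul_of_nonneg_left hgk (hηpos k).le
    calc ‖v - x k‖ ^ 2 = ‖x k - v‖ ^ 2 := by rw [norm_sub_rev]
      _ ≤ η k * (f v - f (x k)) := le_trans h1 h2
  have hmono : ∀ k, f (x k) ≤ f (x (k + 1)) := by
    intro k
    have h1 := key k
    have h2 : (0:ℝ) ≤ ‖x (k + 1) - x k‖ ^ 2 := sq_nonneg _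
    nlinarith [hηpos k]
  obtain ⟨B, hB⟩ := hfb
  have hMono : Monotone (fun k => f (x k)) := monotone_nat_of_le_succ hmono
  have hBdd : BddAbove (Set.range fun k => f (x k)) :=
    ⟨B, by rintro r ⟨k, rfl⟩; exact hB _ (hxS' k)⟩
  have hconvF : Tendsto (fun k => f (x k)) atTop (nhds (⨆ k, f (x k))) :=
    tendsto_atTop_ciSup hMono hBdd
  have hdiff : Tendsto (fun k => f (x (k + 1)) - f (x k)) atTop (nhds 0) := by
    have := (hconvF.comp (tendsto_add_atTop_nat 1)).sub hconvF
    simpa using this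
  obtain ⟨M, hM⟩ := hηbdd
  have hM' : ∀ᶠ k in atTop, η k ≤ M := eventually_map.mp hM
  have hsq : Tendsto (fun k => ‖x (k + 1) - x k‖ ^ 2) atTop (nhds 0) := by
    have hg0 : Tendsto (fun k => (max M 0) * (f (x (k + 1)) - f (x k))) atTop (nhds 0) := by
      simpa using hdiff.const_mul (max M 0)
    refine squeeze_zero' (Eventually.of_forall fun k => sq_nonneg _) ?_ hg0
    filter_upwards [hM'] with k hk
    have hd : 0 ≤ f (x (k + 1)) - f (x k) := sub_nonneg.2 (hmono k)
    have : η k * (f (x (k + 1)) - f (x k)) ≤ (max M 0) * (f (x (k + 1)) - f (x k)) :=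
      mul_le_mul_of_nonneg_right (le_trans hk (le_max_left _ _)) hd
    exact le_trans (key k) this
  have := (Real.continuous_sqrt.tendsto 0).comp hsq
  simp only [Real.sqrt_zero] at this
  convert this using 2 with k
  simp [Function.comp, Real.sqrt_sq (norm_nonneg _)]
end

section
/- Let f : H → ℝ be continuous convex, S ⊆ H compact convex nonempty, and {x_k} generated by projected subgradient ascent x_{k+1} = P_S(x_k + η_k g_k), g_k ∈ ∂f(x_k), with 0 < liminf η_k and limsup η_k < ∞. Then every accumulation point x̃ of {x_k} is a first-order stationary point: there exists g ∈ ∂f(x̃) with ⟨g, z − x̃⟩ ≤ 0 for all z ∈ S. -/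
open RealInnerProductSpace Filter

open Metric in
/-- For continuous convex `f` on a compact convex `S`, projected subgradient ascent with
step sizes bounded away from `0` (positive liminf) and bounded above (finite limsup) has
all its accumulation points first-order stationary: some subgradient of `f` there lies in
the normal cone of `S`. -/
theorem pga_accumulation_first_order_stationary
    {H : Type*} [NormedAddCommGroup H] [InnerProductSpace ℝ H] [CompleteSpace H]
    (S : Set H) (hne : S.Nonempty) (hcomp : IsCompact S) (hconv : Convex ℝ S)
    (f : H → ℝ) (hf : ConvexOn ℝ Set.univ f) (hfc : Continuous f)
    (x : ℕ → H) (η : ℕ → ℝ) (g : ℕ → H)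
    (hx0 : x 0 ∈ S)
    (hηlb : ∃ ε > (0 : ℝ), ∀ᶠ k in atTop, ε ≤ η k)
    (hηub : ∃ C : ℝ, ∀ᶠ k in atTop, η k ≤ C)
    (hηpos : ∀ k, 0 < η k)
    (hg : ∀ k, ∀ z : H, f (x k) + ⟪g k, z - x k⟫ ≤ f z)
    (hxS : ∀ k, x (k + 1) ∈ S)
    (hproj : ∀ k, ∀ z ∈ S, ‖x k + η k • g k - x (k + 1)‖ ≤ ‖x k + η k • g k - z‖)
    (xt : H) (φ : ℕ → ℕ) (hφ : StrictMono φ)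
    (hacc : Tendsto (fun j => x (φ j)) atTop (nhds xt)) :
    ∃ gt : H, (∀ z : H, f xt + ⟪gt, z - xt⟫ ≤ f z) ∧ ∀ z ∈ S, ⟪gt, z - xt⟫ ≤ 0 := by
  obtain ⟨ε, hε, hεev⟩ := hηlb
  obtain ⟨C, hCev⟩ := hηub
  have hxSall : ∀ k, x k ∈ S := fun k => Nat.casesOn k hx0 hxS
  haveI : Nonempty S := hne.to_subtype
  -- variational inequality of the projection
  have hVI : ∀ k, ∀ z ∈ S, ⟪x k + η k • g k - x (k + 1), z - x (k + 1)⟫ ≤ 0 := by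
    intro k
    have heq : ‖x k + η k • g k - x (k + 1)‖ = ⨅ w : S, ‖x k + η k • g k - w‖ := by
      refine le_antisymm (le_ciInf fun w => hproj k w w.2) ?_
      have hb : BddBelow (Set.range fun w : S => ‖x k + η k • g k - (w : H)‖) :=
        ⟨0, by rintro a ⟨w, rfl⟩; exact norm_nonneg _⟩
      exact ciInf_le hb ⟨x (k + 1), hxS k⟩
    exact (norm_eq_iInf_iff_real_inner_le_zero hconv (hxS k)).mp heq
  -- expansion of the VI inner product
  have hexp : ∀ k (z : H), ⟪x k + η k • g k - x (k + 1), z - x (k + 1)⟫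
      = ⟪x k - x (k + 1), z - x (k + 1)⟫ + η k * ⟪g k, z - x (k + 1)⟫ := by
    intro k z
    rw [show x k + η k • g k - x (k + 1) = (x k - x (k + 1)) + η k • g k by abel,
      inner_add_left, real_inner_smul_left]
  -- per-step gain
  have hgain : ∀ k, ‖x (k + 1) - x k‖ ^ 2 / η k ≤ ⟪g k, x (k + 1) - x k⟫ := by
    intro k
    have h := hVI k (x k) (hxSall k)
    rw [hexp k (x k)] at h
    have h1 : ⟪x k - x (k + 1), x k - x (k + 1)⟫ = ‖x (k + 1) - x k‖ ^ 2 := by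
      rw [real_inner_self_eq_norm_sq, norm_sub_rev]
    have h2 : ⟪g k, x k - x (k + 1)⟫ = -⟪g k, x (k + 1) - x k⟫ := by
      rw [← inner_neg_right, neg_sub]
    rw [h1, h2, mul_neg] at h
    rw [div_le_iff₀ (hηpos k)]
    linarith [mul_comm (η k) ⟪g k, x (k + 1) - x k⟫]
  -- monotone increase of the values
  have hmono : ∀ k, f (x k) + ‖x (k + 1) - x k‖ ^ 2 / η k ≤ f (x (k + 1)) := by
    intro k
    have h := hg k (x (k + 1))
    have := hgain k
    linarith
  have hstep_nonneg : ∀ k, 0 ≤ ‖x (k + 1) - x k‖ ^ 2 / η k := fun k =>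
    div_nonneg (sq_nonneg _) (hηpos k).le
  have hFmono : Monotone fun k => f (x k) :=
    monotone_nat_of_le_succ fun k => by have := hmono k; have := hstep_nonneg k; linarith
  -- bounded above on S
  obtain ⟨m, hmS, hmax⟩ := hcomp.exists_isMaxOn hne hfc.continuousOn
  have hbdd : BddAbove (Set.range fun k => f (x k)) :=
    ⟨f m, by rintro a ⟨k, rfl⟩; exact hmax (hxSall k)⟩
  have hL : Tendsto (fun k => f (x k)) atTop (nhds (⨆ k, f (x k))) :=
    tendsto_atTop_ciSup hFmono hbdd
  have hL1 : Tendsto (fun k => f (x (k + 1))) atTop (nhds (⨆ k, f (x k))) :=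
    hL.comp (tendsto_add_atTop_nat 1)
  have hdiff : Tendsto (fun k => f (x (k + 1)) - f (x k)) atTop (nhds 0) := by
    have := hL1.sub hL
    simpa using this
  -- step sizes go to zero
  have hd2 : Tendsto (fun k => ‖x (k + 1) - x k‖ ^ 2) atTop (nhds 0) := by
    have hub : ∀ᶠ k in atTop, ‖x (k + 1) - x k‖ ^ 2 ≤ C * (f (x (k + 1)) - f (x k)) := by
      filter_upwards [hCev] with k hk
      have h1 := hmono k
      have h2 := hstep_nonneg k
      have h3 : ‖x (k + 1) - x k‖ ^ 2 ≤ η k * (f (x (k + 1)) - f (x k)) := by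
        rw [← div_le_iff₀' (hηpos k)]; linarith
      have h4 : η k * (f (x (k + 1)) - f (x k)) ≤ C * (f (x (k + 1)) - f (x k)) := by
        have : 0 ≤ f (x (k + 1)) - f (x k) := by linarith
        exact mul_le_mul_of_nonneg_right hk this
      linarith
    have hC0 : Tendsto (fun k => C * (f (x (k + 1)) - f (x k))) atTop (nhds 0) := by
      have := hdiff.const_mul C; simpa using this
    exact squeeze_zero' (Eventually.of_forall fun k => sq_nonneg _) hub hC0
  have hd : Tendsto (fun k => ‖x (k + 1) - x k‖) atTop (nhds 0) := by
    have h := (Real.continuous_sqrt.tendsto' 0 0 Real.sqrt_zero).comp hd2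
    have : (fun k => Real.sqrt (‖x (k + 1) - x k‖ ^ 2)) = fun k => ‖x (k + 1) - x k‖ := by
      funext k; exact Real.sqrt_sq (norm_nonneg _)
    rwa [Function.comp_def, this] at h
  have hφtop : Tendsto φ atTop atTop := hφ.tendsto_atTop
  have hdj : Tendsto (fun j => ‖x (φ j + 1) - x (φ j)‖) atTop (nhds 0) := hd.comp hφtop
  have hbacc : Tendsto (fun j => x (φ j + 1)) atTop (nhds xt) := by
    have h1 : Tendsto (fun j => x (φ j + 1) - x (φ j)) atTop (nhds 0) :=
      tendsto_zero_iff_norm_tendsto_zero.mpr hdj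
    have h2 := hacc.add h1
    simpa using h2
  -- uniform bound on the subgradients along the subsequence
  obtain ⟨δ, hδ, hδf⟩ := Metric.continuous_iff.mp hfc xt 1 one_pos
  set r : ℝ := δ / 3 with hrdef
  have hr : 0 < r := by positivity
  set M : ℝ := 2 / r with hMdef
  have hM : 0 < M := by positivity
  have hbound : ∀ k, dist (x k) xt < r → ‖g k‖ ≤ M := by
    intro k hk
    rcases eq_or_ne (g k) 0 with h0 | h0
    · rw [h0, norm_zero]; exact hM.le
    · have hgn : 0 < ‖g k‖ := norm_pos_iff.mpr h0
      have h1 := hg k (x k + (r / ‖g k‖) • g k)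
      have hin : ⟪g k, x k + (r / ‖g k‖) • g k - x k⟫ = r * ‖g k‖ := by
        rw [add_sub_cancel_left, real_inner_smul_right, real_inner_self_eq_norm_sq]
        field_simp
      have hdz : dist (x k + (r / ‖g k‖) • g k) xt < δ := by
        have h2 : dist (x k + (r / ‖g k‖) • g k) (x k) = r := by
          rw [dist_eq_norm, add_sub_cancel_left, norm_smul, Real.norm_eq_abs,
            abs_of_pos (by positivity)]
          field_simp
        calc dist (x k + (r / ‖g k‖) • g k) xt
            ≤ dist (x k + (r / ‖g k‖) • g k) (x k) + dist (x k) xt := dist_triangle _ _ _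
          _ < r + r := by rw [h2]; linarith
          _ < δ := by rw [hrdef]; linarith
      have hfz := hδf _ hdz
      have hfx := hδf _ (lt_trans hk (by rw [hrdef]; linarith))
      rw [Real.dist_eq, abs_lt] at hfz hfx
      have : r * ‖g k‖ ≤ 2 := by rw [hin] at h1; linarith
      rw [hMdef, le_div_iff₀ hr]; linarith [this, mul_comm r ‖g k‖]
  have hMev : ∀ᶠ j in atTop, ‖g (φ j)‖ ≤ M := by
    filter_upwards [Metric.tendsto_nhds.mp hacc r hr] with j hj
    exact hbound _ hj
  -- ultrafilter and weak cluster point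
  set U : Ultrafilter ℕ := Ultrafilter.of atTop with hUdef
  have hU : (U : Filter ℕ) ≤ atTop := Ultrafilter.of_le _
  set T : ℕ → WeakDual ℝ H :=
    fun j => StrongDual.toWeakDual (InnerProductSpace.toDual ℝ H (g (φ j))) with hTdef
  have hKcomp := WeakDual.isCompact_closedBall (𝕜 := ℝ) (E := H) 0 M
  have hmem : ∀ᶠ j in (U : Filter ℕ),
      T j ∈ WeakDual.toStrongDual ⁻¹' Metric.closedBall 0 M := by
    filter_upwards [hMev.filter_mono hU] with j hj
    simpa [hTdef, Metric.mem_closedBall, dist_zero_right] using hj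
  obtain ⟨ψ, hψmem, hψle⟩ := hKcomp.ultrafilter_le_nhds (U.map T)
    (by rwa [Ultrafilter.coe_map, le_principal_iff, mem_map])
  have hT : Tendsto T (U : Filter ℕ) (nhds ψ) := by
    rw [Tendsto, ← Ultrafilter.coe_map]; exact hψle
  set gt : H := (InnerProductSpace.toDual ℝ H).symm (WeakDual.toStrongDual ψ) with hgtdef
  have hev : ∀ y : H, Tendsto (fun j => ⟪g (φ j), y⟫) (U : Filter ℕ) (nhds ⟪gt, y⟫) := by
    intro y
    have h1 : Tendsto (fun w : WeakDual ℝ H => w y) (nhds ψ) (nhds (ψ y)) :=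
      (WeakDual.eval_continuous y).tendsto ψ
    have h2 := h1.comp hT
    have h3 : ⟪gt, y⟫ = ψ y := by
      rw [hgtdef]; exact InnerProductSpace.toDual_symm_apply
    have heq : ((fun w : WeakDual ℝ H => w y) ∘ T) = fun j => ⟪g (φ j), y⟫ := by
      funext j; rw [hTdef]; exact InnerProductSpace.toDual_apply_apply
    rw [heq] at h2
    rwa [h3]
  -- weak-strong limit of inner products
  have hkey : ∀ (w : ℕ → H) (wl : H), Tendsto w atTop (nhds wl) →
      Tendsto (fun j => ⟪g (φ j), w j⟫) (U : Filter ℕ) (nhds ⟪gt, wl⟫) := by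
    intro w wl hw
    have h2 : Tendsto (fun j => ⟪g (φ j), w j - wl⟫) (U : Filter ℕ) (nhds 0) := by
      have hn : Tendsto (fun j => M * ‖w j - wl‖) (U : Filter ℕ) (nhds 0) := by
        have h4 : Tendsto (fun j => ‖w j - wl‖) atTop (nhds 0) := by
          have := tendsto_iff_norm_sub_tendsto_zero.mp hw
          simpa using this
        have := (h4.const_mul M).mono_left hU
        simpa using this
      refine squeeze_zero_norm' ?_ hn
      filter_upwards [hMev.filter_mono hU] with j hj
      calc ‖⟪g (φ j), w j - wl⟫‖ ≤ ‖g (φ j)‖ * ‖w j - wl‖ := norm_inner_le_norm _ _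
        _ ≤ M * ‖w j - wl‖ := mul_le_mul_of_nonneg_right hj (norm_nonneg _)
    have h5 := (hev wl).add h2
    have h6 : (fun j => ⟪g (φ j), wl⟫ + ⟪g (φ j), w j - wl⟫) = fun j => ⟪g (φ j), w j⟫ := by
      funext j; rw [← inner_add_right]; congr 1; abel
    rw [h6] at h5
    simpa using h5
  refine ⟨gt, fun z => ?_, fun z hz => ?_⟩
  · -- subgradient inequality at xt
    have l1 : Tendsto (fun j => f (x (φ j)) + ⟪g (φ j), z - x (φ j)⟫) (U : Filter ℕ)
        (nhds (f xt + ⟪gt, z - xt⟫)) := by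
      refine Tendsto.add ?_ (hkey _ _ (tendsto_const_nhds.sub hacc))
      exact ((hfc.tendsto xt).comp hacc).mono_left hU
    exact le_of_tendsto_of_tendsto' l1 tendsto_const_nhds fun j => hg (φ j) z
  · -- normal cone condition
    obtain ⟨R, hR⟩ := hcomp.isBounded.subset_closedBall 0
    obtain ⟨s0, hs0⟩ := hne
    have hR0 : 0 ≤ R := by
      have := hR hs0; rw [Metric.mem_closedBall, dist_zero_right] at this
      exact le_trans (norm_nonneg _) this
    set D : ℝ := ‖z‖ + R with hDdef
    have hD0 : 0 ≤ D := by positivity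
    have hev2 : ∀ᶠ j in atTop,
        ⟪g (φ j), z - x (φ j + 1)⟫ ≤ ‖x (φ j + 1) - x (φ j)‖ * D / ε := by
      filter_upwards [hφtop.eventually hεev] with j hηj
      set k := φ j
      have hvi := hVI k z hz
      rw [hexp k z] at hvi
      have hzb : ‖z - x (k + 1)‖ ≤ D := by
        have := hR (hxS k); rw [Metric.mem_closedBall, dist_zero_right] at this
        calc ‖z - x (k + 1)‖ ≤ ‖z‖ + ‖x (k + 1)‖ := norm_sub_le _ _
          _ ≤ D := by rw [hDdef]; linarith
      have h3 : ⟪x (k + 1) - x k, z - x (k + 1)⟫ ≤ ‖x (k + 1) - x k‖ * D :=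
        le_trans (real_inner_le_norm _ _) (mul_le_mul_of_nonneg_left hzb (norm_nonneg _))
      have h4 : ⟪x k - x (k + 1), z - x (k + 1)⟫ = -⟪x (k + 1) - x k, z - x (k + 1)⟫ := by
        rw [← inner_neg_left, neg_sub]
      have h2 : η k * ⟪g k, z - x (k + 1)⟫ ≤ ‖x (k + 1) - x k‖ * D := by
        rw [h4] at hvi; linarith
      rcases le_or_gt ⟪g k, z - x (k + 1)⟫ 0 with h | h
      · exact h.trans (div_nonneg (mul_nonneg (norm_nonneg _) hD0) hε.le)
      · rw [le_div_iff₀ hε]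
        nlinarith [hηj, h2, h]
    have lhs := hkey (fun j => z - x (φ j + 1)) (z - xt) (tendsto_const_nhds.sub hbacc)
    have rhs : Tendsto (fun j => ‖x (φ j + 1) - x (φ j)‖ * D / ε) (U : Filter ℕ) (nhds 0) := by
      have := ((hdj.mul_const D).div_const ε).mono_left hU
      simpa using this
    exact le_of_tendsto_of_tendsto lhs rhs (hev2.filter_mono hU)
end

section
/- Let S be a nonempty closed convex subset of a real Hilbert space H, x₀ ∈ H, c ∈ H, and suppose the maximizer set M(c) of ⟨c, ·⟩ over S is nonempty. If {η_j} → ∞ and x^{η_j} = P_S(x₀ + η_j c) converges weakly to x̄ ∈ S, then x̄ ∈ M(c) and ‖x̄ − x₀‖ ≤ ‖x* − x₀‖, where x* = P_{M(c)}(x₀). -/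
open RealInnerProductSpace Filter

/-- If `η_j → ∞` and the projections `x^{η_j} = P_S(x₀ + η_j c)` converge weakly to
`x̄ ∈ S`, then `x̄` is a maximizer of `⟪c,·⟫` over `S` and `‖x̄ - x₀‖ ≤ ‖x* - x₀‖`,
where `x*` is the maximizer closest to `x₀`. -/
theorem weak_limit_of_projections_is_maximizer
    {H : Type*} [NormedAddCommGroup H] [InnerProductSpace ℝ H] [CompleteSpace H]
    (S : Set H) (hne : S.Nonempty) (hcl : IsClosed S) (hconv : Convex ℝ S)
    (c x₀ : H)
    (M : Set H) (hM : M = {x ∈ S | ∀ z ∈ S, ⟪c, z⟫ ≤ ⟪c, x⟫}) (hMne : M.Nonempty)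
    (xstar : H) (hxstarM : xstar ∈ M)
    (hxstar : ∀ y ∈ M, ‖xstar - x₀‖ ≤ ‖y - x₀‖)
    (η : ℕ → ℝ) (hη : Tendsto η atTop atTop)
    (xη : ℕ → H) (hxηS : ∀ j, xη j ∈ S)
    (hxη : ∀ j, ∀ z ∈ S, ‖x₀ + η j • c - xη j‖ ≤ ‖x₀ + η j • c - z‖)
    (xbar : H) (hxbarS : xbar ∈ S)
    (hweak : ∀ y : H, Tendsto (fun j => ⟪xη j, y⟫) atTop (nhds ⟪xbar, y⟫)) :
    xbar ∈ M ∧ ‖xbar - x₀‖ ≤ ‖xstar - x₀‖ := by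
  rw [hM] at hxstarM
  obtain ⟨hxstarS, hmax⟩ := hxstarM
  have key : ∀ j, 2 * η j * (⟪c, xstar⟫ - ⟪c, xη j⟫) ≤ ‖xstar - x₀‖ ^ 2 - ‖xη j - x₀‖ ^ 2 := by
    intro j
    have h := hxη j xstar hxstarS
    have h2 : ‖x₀ + η j • c - xη j‖ ^ 2 ≤ ‖x₀ + η j • c - xstar‖ ^ 2 :=
      pow_le_pow_left₀ (norm_nonneg _) h 2
    have e1 : ∀ z : H, ‖x₀ + η j • c - z‖ ^ 2
        = ‖x₀ + η j • c‖ ^ 2 - 2 * (⟪x₀, z⟫ + η j * ⟪c, z⟫) + ‖z‖ ^ 2 := by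
      intro z
      rw [@norm_sub_sq_real H, inner_add_left, real_inner_smul_left]
    have e2 : ∀ z : H, ‖z - x₀‖ ^ 2 = ‖z‖ ^ 2 - 2 * ⟪x₀, z⟫ + ‖x₀‖ ^ 2 := by
      intro z
      rw [@norm_sub_sq_real H, real_inner_comm]
    rw [e1, e1] at h2
    have e2s := e2 xstar
    have e2j := e2 (xη j)
    linarith
  have hineq : ∀ᶠ j in atTop, ‖xη j - x₀‖ ≤ ‖xstar - x₀‖ := by
    filter_upwards [hη.eventually_gt_atTop 0] with j hj
    have hk := key j
    have hc : ⟪c, xη j⟫ ≤ ⟪c, xstar⟫ := hmax _ (hxηS j)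
    have hsq : ‖xη j - x₀‖ ^ 2 ≤ ‖xstar - x₀‖ ^ 2 := by nlinarith
    exact le_of_pow_le_pow_left₀ two_ne_zero (norm_nonneg _) hsq
  have hcw : Tendsto (fun j => ⟪c, xη j⟫) atTop (nhds ⟪c, xbar⟫) := by
    have := hweak c
    simp only [real_inner_comm] at this ⊢
    exact this
  have hcbar : ⟪c, xstar⟫ ≤ ⟪c, xbar⟫ := by
    have hden : Tendsto (fun j => (2 : ℝ) * η j) atTop atTop :=
      hη.const_mul_atTop two_pos
    have hb : Tendsto (fun j => ⟪c, xη j⟫ + ‖xstar - x₀‖ ^ 2 / (2 * η j)) atTop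
        (nhds (⟪c, xbar⟫ + 0)) :=
      hcw.add (Tendsto.div_atTop tendsto_const_nhds hden)
    rw [add_zero] at hb
    refine ge_of_tendsto hb ?_
    filter_upwards [hη.eventually_gt_atTop 0] with j hj
    have hk := key j
    have h2 : ⟪c, xstar⟫ - ⟪c, xη j⟫ ≤ ‖xstar - x₀‖ ^ 2 / (2 * η j) := by
      rw [le_div_iff₀ (by positivity)]
      nlinarith [sq_nonneg ‖xη j - x₀‖]
    linarith
  have hmem : xbar ∈ M := by
    rw [hM]
    exact ⟨hxbarS, fun z hz => (hmax z hz).trans hcbar⟩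
  refine ⟨hmem, ?_⟩
  have hw2 : Tendsto (fun j => ⟪xη j - x₀, xbar - x₀⟫) atTop
      (nhds ⟪xbar - x₀, xbar - x₀⟫) := by
    simp only [inner_sub_left]
    exact (hweak (xbar - x₀)).sub tendsto_const_nhds
  have hfin : ‖xbar - x₀‖ ^ 2 ≤ ‖xstar - x₀‖ * ‖xbar - x₀‖ := by
    rw [← real_inner_self_eq_norm_sq]
    refine le_of_tendsto hw2 ?_
    filter_upwards [hineq] with j hj
    calc ⟪xη j - x₀, xbar - x₀⟫ ≤ ‖xη j - x₀‖ * ‖xbar - x₀‖ := real_inner_le_norm _ _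
      _ ≤ _ := mul_le_mul_of_nonneg_right hj (norm_nonneg _)
  rcases eq_or_lt_of_le (norm_nonneg (xbar - x₀)) with h0 | h0
  · rw [← h0]; exact norm_nonneg _
  · nlinarith
end
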